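/- For any continuous v on [-1,1], the coefficient of L_k in the Legendre expansion of v − P^+ v equals (−1)^{k+1} v(−1) + (1/2) ∫_{-1}^1 v(s) Σ_{m=0}^{k} (−1)^{k+m} (2m+1) L_m(s) ds, where P^+ is the degree-k left Gauss–Radau projection. -/

import Mathlib

open Polynomial Finset

/-- Legendre polynomial of degree `m` on `[-1,1]`, normalized so `L_m(1) = 1`. -/
noncomputable def leg (m : ℕ) : Polynomial ℝ :=
  Polynomial.C (((2 : ℝ) ^ m * Nat.factorial m)⁻¹) *
    (fun p => Polynomial.derivative p)^[m] ((Polynomial.X ^ 2 - 1) ^ m)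

/-- Degree-`k` left Gauss–Radau projection on `[-1,1]`. -/
def IsRadauPos (k : ℕ) (v : ℝ → ℝ) (p : Polynomial ℝ) : Prop :=
  p.natDegree ≤ k ∧
  (∀ w : Polynomial ℝ, w.natDegree + 1 ≤ k →
    ∫ s in (-1 : ℝ)..1, (v s - p.eval s) * w.eval s = 0) ∧
  p.eval (-1) = v (-1)

noncomputable def phi (n : ℕ) : Polynomial ℝ := (X ^ 2 - 1) ^ n

lemma iter_add (k : ℕ) (p q : Polynomial ℝ) :
    derivative^[k] (p + q) = derivative^[k] p + derivative^[k] q := by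
  induction k generalizing p q with
  | zero => simp
  | succ k ih => simp [Function.iterate_succ_apply, derivative_add, ih]

lemma phi_deriv (n : ℕ) :
    derivative (phi (n + 1)) = (2 * ((n : Polynomial ℝ) + 1)) * (X * phi n) := by
  simp only [phi, derivative_pow, derivative_sub, derivative_one, derivative_X_pow, derivative_X,
    C_eq_natCast, pow_one, Nat.add_sub_cancel, sub_zero]
  push_cast
  ring

lemma iter_succ_eq (m : ℕ) (q : Polynomial ℝ) :
    derivative^[m + 1] q = derivative^[m] (derivative q) := Function.iterate_succ_apply _ _ _

lemma iter_deriv_X_mul (m : ℕ) (q : Polynomial ℝ) :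
    derivative^[m + 1] (X * q) =
      X * derivative^[m + 1] q + ((m : Polynomial ℝ) + 1) * derivative^[m] q := by
  induction m generalizing q with
  | zero => simp [derivative_mul]; ring
  | succ m ih =>
    rw [iter_succ_eq (m+1) (X*q), derivative_mul, derivative_X, one_mul, iter_add,
      ih (derivative q), iter_succ_eq (m+1) q, ← iter_succ_eq m q, ← iter_succ_eq (m+1) q]
    push_cast
    ring

/-- second-order Leibniz for (X^2-1) * q -/
lemma iter_deriv_X2_mul (m : ℕ) (q : Polynomial ℝ) :
    derivative^[m + 2] ((X ^ 2 - 1) * q) =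
      (X ^ 2 - 1) * derivative^[m + 2] q
        + (2 * ((m : Polynomial ℝ) + 2)) * (X * derivative^[m + 1] q)
        + (((m : Polynomial ℝ) + 2) * ((m : Polynomial ℝ) + 1)) * derivative^[m] q := by
  induction m generalizing q with
  | zero =>
    norm_num [iter_succ_eq, derivative_mul, derivative_sub, derivative_one, derivative_X_pow,
      C_eq_natCast, map_ofNat, Function.iterate_zero_apply]
    ring
  | succ m ih =>
    have key : ∀ r : Polynomial ℝ, derivative^[m+1+2] r = derivative^[m+2] (derivative r) := by
      intro r; rw [show m+1+2 = m+2+1 by omega]; exact iter_succ_eq _ _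
    have hd : derivative ((X^2-1)*q) = (X^2-1) * derivative q + 2*(X*q) := by
      simp only [derivative_mul, derivative_sub, derivative_one, derivative_X_pow, derivative_X,
        C_eq_natCast, map_ofNat, pow_one, sub_zero]
      push_cast; ring
    have h2 : derivative^[m+2] (2*(X*q)) = 2 * derivative^[m+2] (X*q) := by
      rw [← map_ofNat (C : ℝ →+* Polynomial ℝ) 2, iterate_derivative_C_mul]
    have hx := iter_deriv_X_mul (m+1) q
    rw [show m+1+1 = m+2 by omega] at hx
    rw [key ((X^2-1)*q), hd, iter_add, ih (derivative q), h2, hx]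
    simp only [← iter_succ_eq]
    rw [show m+2+1 = m+1+2 by omega, show m+1+1 = m+2 by omega]
    push_cast
    ring

lemma iter_phi_succ (n m : ℕ) :
    derivative^[m + 1] (phi (n + 1)) =
      (2 * ((n : Polynomial ℝ) + 1)) * derivative^[m] (X * phi n) := by
  rw [iter_succ_eq, phi_deriv]
  rw [show (2 * ((n : Polynomial ℝ) + 1)) = C (2 * ((n:ℝ) + 1)) by rw [map_mul, map_add, map_one, C_eq_natCast, map_ofNat]]
  rw [iterate_derivative_C_mul]

lemma vanish_iter {n j : ℕ} (h : j < n) (x : ℝ) (hx : x ^ 2 - 1 = 0) :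
    (derivative^[j] (phi n)).eval x = 0 := by
  obtain ⟨r, hr⟩ := pow_sub_dvd_iterate_derivative_pow ((X:Polynomial ℝ)^2 - 1) n j
  rw [phi, hr, eval_mul, eval_pow]
  have : (X^2 - 1 : Polynomial ℝ).eval x = 0 := by simp; linarith
  rw [this, zero_pow (by omega), zero_mul]

/-- Legendre differential equation identity at index n+1. -/
lemma ode (n : ℕ) :
    (X ^ 2 - 1) * derivative^[n + 3] (phi (n + 1))
      + 2 * (X * derivative^[n + 2] (phi (n + 1)))
      = (((n : Polynomial ℝ) + 1) * ((n : Polynomial ℝ) + 2)) * derivative^[n + 1] (phi (n + 1)) := by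
  have E : (X^2 - 1) * derivative (phi (n+1)) = (2 * ((n:Polynomial ℝ) + 1)) * (X * phi (n+1)) := by
    rw [phi_deriv]
    have : (X^2 - 1 : Polynomial ℝ) * phi n = phi (n+1) := by
      rw [phi, phi, pow_succ]; ring
    calc (X^2-1) * ((2 * ((n:Polynomial ℝ) + 1)) * (X * phi n))
        = (2 * ((n:Polynomial ℝ) + 1)) * (X * ((X^2-1) * phi n)) := by ring
      _ = _ := by rw [this]
  have h := congrArg (derivative^[n+2]) E
  rw [iter_deriv_X2_mul n (derivative (phi (n+1)))] at h
  have hc : ∀ r : Polynomial ℝ, derivative^[n+2] ((2 * ((n:Polynomial ℝ) + 1)) * r)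
      = (2 * ((n:Polynomial ℝ) + 1)) * derivative^[n+2] r := by
    intro r
    rw [show (2 * ((n : Polynomial ℝ) + 1)) = C (2 * ((n:ℝ) + 1)) by
      rw [map_mul, map_add, map_one, C_eq_natCast, map_ofNat]]
    rw [iterate_derivative_C_mul]
  have hx := iter_deriv_X_mul (n+1) (phi (n+1))
  rw [show n+1+1 = n+2 by omega] at hx
  rw [hc, hx] at h
  simp only [← iter_succ_eq] at h
  rw [show n+2+1 = n+3 by omega, show n+1+1 = n+2 by omega] at h
  push_cast at h ⊢
  linear_combination h

lemma poly_eq_of_deriv_eq {p q : Polynomial ℝ} (h : derivative p = derivative q)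
    (h1 : p.eval 1 = q.eval 1) : p = q := by
  have hd : derivative (p - q) = 0 := by rw [derivative_sub, h, sub_self]
  have hc := eq_C_of_derivative_eq_zero hd
  have hv : (p - q).coeff 0 = 0 := by
    have h2 := congrArg (eval 1) hc
    simp [h1] at h2
    rw [coeff_sub]
    linarith
  have h3 : p - q = 0 := by rw [hc, hv, map_zero]
  exact sub_eq_zero.mp h3

lemma x2_iter (n : ℕ) :
    X ^ 2 * derivative^[n + 2] (phi (n + 1)) =
      derivative^[n + 2] (phi (n + 1))
        + (((n : Polynomial ℝ) + 1) * ((n : Polynomial ℝ) + 2)) * derivative^[n] (phi (n + 1)) := by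
  have cmul : ∀ r : Polynomial ℝ, derivative ((((n : Polynomial ℝ) + 1) * ((n : Polynomial ℝ) + 2)) * r)
      = (((n : Polynomial ℝ) + 1) * ((n : Polynomial ℝ) + 2)) * derivative r := by
    intro r
    rw [show (((n : Polynomial ℝ) + 1) * ((n : Polynomial ℝ) + 2)) = C (((n:ℝ)+1)*((n:ℝ)+2)) by
      rw [map_mul, map_add, map_add, map_one, C_eq_natCast, map_ofNat]]
    simpa using iterate_derivative_C_mul (((n:ℝ)+1)*((n:ℝ)+2)) r 1
  have key : (X^2 - 1) * derivative^[n+2] (phi (n+1))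
      = (((n : Polynomial ℝ) + 1) * ((n : Polynomial ℝ) + 2)) * derivative^[n] (phi (n+1)) := by
    apply poly_eq_of_deriv_eq
    · have i1 : derivative (derivative^[n+2] (phi (n+1))) = derivative^[n+3] (phi (n+1)) := by
        rw [show n+3 = n+2+1 by omega]
        exact (Function.iterate_succ_apply' derivative (n+2) (phi (n+1))).symm
      have i2 : derivative (derivative^[n] (phi (n+1))) = derivative^[n+1] (phi (n+1)) :=
        (Function.iterate_succ_apply' derivative n (phi (n+1))).symm
      rw [derivative_mul, cmul, i1, i2]
      have hode := ode n
      have hder : derivative (X^2 - 1 : Polynomial ℝ) = 2 * X := by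
        simp [derivative_X_pow, C_eq_natCast, map_ofNat]
        norm_num
      rw [hder]
      linear_combination hode
    · rw [eval_mul, eval_mul]
      have v1 : (derivative^[n] (phi (n+1))).eval 1 = 0 := vanish_iter (by omega) 1 (by norm_num)
      rw [v1, mul_zero]
      have : ((X:Polynomial ℝ)^2 - 1).eval 1 = 0 := by simp
      rw [this, zero_mul]
  linear_combination key

lemma eval_iter_phi (n : ℕ) :
    (derivative^[n] (phi n)).eval 1 = 2 ^ n * (Nat.factorial n : ℝ) ∧
    (derivative^[n] (phi n)).eval (-1) = (-2) ^ n * (Nat.factorial n : ℝ) := by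
  induction n with
  | zero => simp [phi]
  | succ n ih =>
    have h := iter_phi_succ n n
    match n, ih, h with
    | 0, ih, h =>
      constructor <;> · rw [h]; simp [phi, Nat.factorial]
    | (m+1 : ℕ), ih, h =>
      have hx := iter_deriv_X_mul m (phi (m+1))
      rw [hx] at h
      have v1 : (derivative^[m] (phi (m+1))).eval 1 = 0 := vanish_iter (by omega) 1 (by norm_num)
      have v2 : (derivative^[m] (phi (m+1))).eval (-1) = 0 := vanish_iter (by omega) (-1) (by norm_num)
      constructor
      · rw [h]; simp only [eval_mul, eval_add, eval_natCast, eval_X, eval_one, eval_ofNat,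
          Nat.cast_add, Nat.cast_one]
        simp only [Nat.factorial_succ] at ih ⊢
        rw [ih.1, v1]
        push_cast
        ring
      · rw [h]; simp only [eval_mul, eval_add, eval_natCast, eval_X, eval_one, eval_ofNat,
          Nat.cast_add, Nat.cast_one]
        simp only [Nat.factorial_succ] at ih ⊢
        rw [ih.2, v2]
        push_cast
        ring

lemma leg_eq (n : ℕ) :
    leg n = C (((2:ℝ) ^ n * (Nat.factorial n : ℝ))⁻¹) * derivative^[n] (phi n) := rfl

lemma fac_ne (n : ℕ) : ((2:ℝ) ^ n * (Nat.factorial n : ℝ)) ≠ 0 := by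
  positivity

lemma leg_eval_one (n : ℕ) : (leg n).eval 1 = 1 := by
  rw [leg_eq, eval_mul, eval_C, (eval_iter_phi n).1]
  field_simp

lemma leg_eval_neg_one (n : ℕ) : (leg n).eval (-1) = (-1) ^ n := by
  rw [leg_eq, eval_mul, eval_C, (eval_iter_phi n).2]
  rw [show ((-2:ℝ)) ^ n = (-1)^n * 2^n by rw [← neg_one_mul, mul_pow]]
  field_simp

lemma leg_natDegree_le (n : ℕ) : (leg n).natDegree ≤ n := by
  rw [leg_eq]
  refine le_trans (natDegree_C_mul_le _ _) ?_
  refine le_trans (natDegree_iterate_derivative _ _) ?_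
  have : (phi n).natDegree ≤ 2 * n := by
    rw [phi]
    refine le_trans (natDegree_pow_le) ?_
    have : ((X:Polynomial ℝ)^2 - 1).natDegree ≤ 2 := by
      refine le_trans (natDegree_sub_le _ _) ?_
      simp
    nlinarith
  omega

lemma Tkey (j : ℕ) :
    derivative^[j+4] (phi (j+3)) =
      (4*((j:Polynomial ℝ)+2)*((j:Polynomial ℝ)+3)) * derivative^[j+2] (phi (j+1))
        + (2*((j:Polynomial ℝ)+3)*(2*(j:Polynomial ℝ)+5)) * derivative^[j+2] (phi (j+2)) := by
  have h1 := iter_phi_succ (j+2) (j+3)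
  have hx1 := iter_deriv_X_mul (j+2) (phi (j+2))
  have h2 := iter_phi_succ (j+1) (j+2)
  have hx2 := iter_deriv_X_mul (j+1) (phi (j+1))
  have h3 := iter_phi_succ (j+1) (j+1)
  have hx3 := iter_deriv_X_mul j (phi (j+1))
  have h4 := x2_iter j
  simp only [show j+1+1 = j+2 from by omega, show j+2+1 = j+3 from by omega,
    show j+3+1 = j+4 from by omega] at h1 hx1 h2 hx2 h3 hx3
  rw [hx1] at h1
  rw [hx2] at h2
  rw [hx3] at h3
  rw [h1, h2, h3]
  push_cast at h4 ⊢
  linear_combination (4*((j:Polynomial ℝ)+2)*((j:Polynomial ℝ)+3)) * h4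

lemma deriv_leg (n : ℕ) :
    derivative (leg n) = C (((2:ℝ) ^ n * (Nat.factorial n : ℝ))⁻¹) * derivative^[n+1] (phi n) := by
  rw [leg_eq, derivative_C_mul, Function.iterate_succ_apply']

lemma natCast_poly_eq_C (r : ℝ) : (C r : Polynomial ℝ) = C r := rfl

lemma recur (j : ℕ) :
    derivative (leg (j+3)) = derivative (leg (j+1)) + (2*(j:Polynomial ℝ)+5) * leg (j+2) := by
  rw [deriv_leg, deriv_leg, leg_eq, show j+3+1 = j+4 by omega, Tkey j]
  have e1 : (4*((j:Polynomial ℝ)+2)*((j:Polynomial ℝ)+3)) = C (4*((j:ℝ)+2)*((j:ℝ)+3)) := by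
    push_cast
    rw [map_mul, map_mul, map_add, map_add, C_eq_natCast, map_ofNat, map_ofNat, map_ofNat]
  have e2 : (2*((j:Polynomial ℝ)+3)*(2*(j:Polynomial ℝ)+5)) = C (2*((j:ℝ)+3)*(2*(j:ℝ)+5)) := by
    push_cast
    rw [map_mul, map_mul, map_add, map_add, map_mul, C_eq_natCast, map_ofNat, map_ofNat, map_ofNat]
  have e3 : (2*(j:Polynomial ℝ)+5) = C (2*(j:ℝ)+5) := by
    push_cast
    rw [map_add, map_mul, C_eq_natCast, map_ofNat, map_ofNat]
  rw [mul_add, e1, e2, e3, ← mul_assoc, ← mul_assoc, ← map_mul, ← map_mul]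
  have c1 : ((2:ℝ) ^ (j+3) * (Nat.factorial (j+3) : ℝ))⁻¹ * (4*((j:ℝ)+2)*((j:ℝ)+3))
      = ((2:ℝ) ^ (j+1) * (Nat.factorial (j+1) : ℝ))⁻¹ := by
    rw [show j+3 = (j+2)+1 by omega, show j+2 = (j+1)+1 by omega]
    rw [pow_succ, pow_succ, Nat.factorial_succ, Nat.factorial_succ]
    push_cast
    have h1 : ((Nat.factorial (j+1) : ℝ)) ≠ 0 := by positivity
    have h2 : ((2:ℝ) ^ (j+1)) ≠ 0 := by positivity
    field_simp
    ring
  have c2 : ((2:ℝ) ^ (j+3) * (Nat.factorial (j+3) : ℝ))⁻¹ * (2*((j:ℝ)+3)*(2*(j:ℝ)+5))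
      = (2*(j:ℝ)+5) * ((2:ℝ) ^ (j+2) * (Nat.factorial (j+2) : ℝ))⁻¹ := by
    rw [show j+3 = (j+2)+1 by omega, pow_succ, Nat.factorial_succ]
    push_cast
    have h1 : ((Nat.factorial (j+2) : ℝ)) ≠ 0 := by positivity
    have h2 : ((2:ℝ) ^ (j+2)) ≠ 0 := by positivity
    field_simp
    ring
  rw [c1, c2, map_mul]
  ring

lemma rec0 : derivative (leg 2) = derivative (leg 0) + 3 * leg 1 := by
  have h2 : ((X:Polynomial ℝ)^2 - 1)^2 = X^4 - 2*X^2 + 1 := by ring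
  rw [leg_eq, leg_eq, leg_eq]
  simp only [phi, h2, pow_one, pow_zero, Function.iterate_zero_apply, iter_succ_eq,
    Function.iterate_one]
  norm_num [derivative_pow, derivative_mul, derivative_sub, derivative_add, derivative_one,
    derivative_X_pow, C_eq_natCast, map_ofNat, derivative_X, Nat.factorial]
  have h24 : (C ((1:ℝ)/8)) * 24 = (C ((1:ℝ)/2)) * 6 := by
    rw [← map_ofNat (C : ℝ →+* Polynomial ℝ) 24, ← map_ofNat (C : ℝ →+* Polynomial ℝ) 6,
      ← map_mul, ← map_mul]
    norm_num
  linear_combination X * h24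

lemma recAll (k : ℕ) :
    derivative (leg (k+2)) = derivative (leg k) + (2*(k:Polynomial ℝ)+3) * leg (k+1) := by
  match k with
  | 0 => simpa using rec0
  | (j+1) =>
    have h := recur j
    rw [show j+1+2 = j+3 by omega, h]
    push_cast
    ring

lemma sum_leg (k : ℕ) :
    ∑ m ∈ range (k+1), C ((-1:ℝ)^m * (2*(m:ℝ)+1)) * leg m
      = C ((-1:ℝ)^k) * (derivative (leg (k+1)) - derivative (leg k)) := by
  induction k with
  | zero =>
    rw [range_one, sum_singleton]
    have h0 : leg 0 = 1 := by
      rw [leg_eq]; simp [phi]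
    have h1 : derivative (leg 1) = 1 := by
      rw [deriv_leg]
      simp only [phi, pow_one, iter_succ_eq, Function.iterate_one, Function.iterate_zero_apply]
      norm_num [derivative_sub, derivative_one, derivative_X_pow, C_eq_natCast, map_ofNat,
        Nat.factorial]
      rw [← map_ofNat (C : ℝ →+* Polynomial ℝ) 2, ← map_mul]
      norm_num
    rw [h0, h1]
    norm_num [h0]
  | succ k ih =>
    rw [sum_range_succ, ih, recAll k]
    have e2 : C ((-1:ℝ)^(k+1)) = - C ((-1:ℝ)^k) := by
      rw [pow_succ, map_mul]; simp
    have e : (C ((-1:ℝ)^(k+1) * (2*((k:ℝ)+1)+1))) = - C ((-1:ℝ)^k) * (2*(k:Polynomial ℝ)+3) := by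
      rw [map_mul, e2]
      have : ((2*((k:ℝ)+1)+1)) = ((2*(k:ℝ)+3)) := by ring
      rw [this]
      have : C ((2*(k:ℝ)+3)) = (2*(k:Polynomial ℝ)+3) := by
        rw [map_add, map_mul, C_eq_natCast, map_ofNat, map_ofNat]
      rw [this]
    push_cast
    push_cast at e
    rw [e, e2]
    ring

lemma poly_intable (p : Polynomial ℝ) :
    IntervalIntegrable (fun s => p.eval s) MeasureTheory.volume (-1 : ℝ) 1 :=
  (Polynomial.continuous p).intervalIntegrable _ _

lemma poly_ibp (p q : Polynomial ℝ) :
    ∫ s in (-1:ℝ)..1, (derivative p).eval s * q.eval s =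
      p.eval 1 * q.eval 1 - p.eval (-1) * q.eval (-1)
        - ∫ s in (-1:ℝ)..1, p.eval s * (derivative q).eval s := by
  have h := intervalIntegral.integral_deriv_mul_eq_sub_of_hasDerivAt
    (a := (-1:ℝ)) (b := 1)
    (u := fun x => p.eval x) (v := fun x => q.eval x)
    (u' := fun x => (derivative p).eval x) (v' := fun x => (derivative q).eval x)
    ((Polynomial.continuous p).continuousOn) ((Polynomial.continuous q).continuousOn)
    (fun x _ => p.hasDerivAt x) (fun x _ => q.hasDerivAt x)
    (poly_intable _) (poly_intable _)
  rw [intervalIntegral.integral_add (f := fun x => (derivative p).eval x * q.eval x)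
    (g := fun x => p.eval x * (derivative q).eval x)
    (((Polynomial.continuous (derivative p)).mul (Polynomial.continuous q)).intervalIntegrable _ _)
    (((Polynomial.continuous p).mul (Polynomial.continuous (derivative q))).intervalIntegrable _ _)]
    at h
  linarith [h]

lemma orth_aux (n : ℕ) :
    ∀ j, j ≤ n → ∀ w : Polynomial ℝ, derivative^[j] w = 0 →
      ∫ s in (-1:ℝ)..1, (derivative^[j] (phi n)).eval s * w.eval s = 0 := by
  intro j
  induction j with
  | zero =>
    intro _ w hw
    simp only [Function.iterate_zero_apply] at hw
    simp [hw]
  | succ j ih =>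
    intro hj w hw
    have hD : derivative^[j+1] (phi n) = derivative (derivative^[j] (phi n)) :=
      (Function.iterate_succ_apply' derivative j (phi n))
    rw [hD, poly_ibp (derivative^[j] (phi n)) w]
    have v1 : (derivative^[j] (phi n)).eval 1 = 0 := vanish_iter (by omega) 1 (by norm_num)
    have v2 : (derivative^[j] (phi n)).eval (-1) = 0 := vanish_iter (by omega) (-1) (by norm_num)
    rw [v1, v2]
    have hw' : derivative^[j] (derivative w) = 0 := by
      rw [← Function.iterate_succ_apply]
      exact hw
    rw [ih (by omega) (derivative w) hw']
    ring

lemma leg_orth (n : ℕ) (w : Polynomial ℝ) (hw : derivative^[n] w = 0) :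
    ∫ s in (-1:ℝ)..1, (leg n).eval s * w.eval s = 0 := by
  rw [leg_eq]
  have : ∀ s : ℝ, ((C (((2:ℝ) ^ n * (Nat.factorial n : ℝ))⁻¹) * derivative^[n] (phi n)).eval s)
      * w.eval s
      = (((2:ℝ) ^ n * (Nat.factorial n : ℝ))⁻¹) * ((derivative^[n] (phi n)).eval s * w.eval s) := by
    intro s; rw [eval_mul, eval_C]; ring
  simp only [this]
  rw [intervalIntegral.integral_const_mul, orth_aux n n le_rfl w hw, mul_zero]

theorem radau_pos_defect_coefficient (k : ℕ) (v : ℝ → ℝ)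
    (hv : ContinuousOn v (Set.Icc (-1 : ℝ) 1)) (p : Polynomial ℝ)
    (hp : IsRadauPos k v p) :
    (2 * k + 1) / 2 * (∫ s in (-1 : ℝ)..1, (v s - p.eval s) * (leg k).eval s) =
      (-1 : ℝ) ^ (k + 1) * v (-1) + (1 / 2) * ∫ s in (-1 : ℝ)..1,
        v s * ∑ m ∈ Finset.range (k + 1), (-1 : ℝ) ^ (k + m) * (2 * m + 1 : ℝ) * (leg m).eval s := by
  obtain ⟨hdeg, horth, hbc⟩ := hp
  have huIcc : Set.uIcc (-1:ℝ) 1 = Set.Icc (-1:ℝ) 1 := Set.uIcc_of_le (by norm_num)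
  have hvc : ContinuousOn v (Set.uIcc (-1:ℝ) 1) := by rw [huIcc]; exact hv
  have hVc : ContinuousOn (fun s => v s - p.eval s) (Set.uIcc (-1:ℝ) 1) :=
    hvc.sub (Polynomial.continuous p).continuousOn
  have hVq : ∀ q : Polynomial ℝ, IntervalIntegrable (fun s => (v s - p.eval s) * q.eval s)
      MeasureTheory.volume (-1:ℝ) 1 :=
    fun q => (hVc.mul (Polynomial.continuous q).continuousOn).intervalIntegrable
  -- the sum polynomial
  set Spoly : Polynomial ℝ :=
    ∑ m ∈ Finset.range (k+1), C ((-1:ℝ)^(k+m) * (2*(m:ℝ)+1)) * leg m with hSdef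
  have hSeval : ∀ s : ℝ, Spoly.eval s
      = ∑ m ∈ Finset.range (k+1), (-1:ℝ)^(k+m) * (2*(m:ℝ)+1) * (leg m).eval s := by
    intro s
    rw [hSdef, eval_finset_sum]
    refine Finset.sum_congr rfl fun m _ => ?_
    rw [eval_mul, eval_C]
  have hSpoly : Spoly = derivative (leg (k+1) - leg k) := by
    rw [derivative_sub]
    have h1 : Spoly = C ((-1:ℝ)^k) *
        ∑ m ∈ Finset.range (k+1), C ((-1:ℝ)^m * (2*(m:ℝ)+1)) * leg m := by
      rw [hSdef, Finset.mul_sum]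
      refine Finset.sum_congr rfl fun m _ => ?_
      rw [← mul_assoc, ← map_mul, pow_add]
      ring_nf
    rw [h1, sum_leg k, ← mul_assoc, ← map_mul, ← mul_pow]
    norm_num
  -- Step B : defect integral against Spoly
  have hB : (∫ s in (-1:ℝ)..1, (v s - p.eval s) * Spoly.eval s)
      = (2*(k:ℝ)+1) * ∫ s in (-1:ℝ)..1, (v s - p.eval s) * (leg k).eval s := by
    have e1 : ∀ s : ℝ, (v s - p.eval s) * Spoly.eval s
        = ∑ m ∈ Finset.range (k+1),
            ((-1:ℝ)^(k+m) * (2*(m:ℝ)+1)) * ((v s - p.eval s) * (leg m).eval s) := by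
      intro s
      rw [hSeval, Finset.mul_sum]
      refine Finset.sum_congr rfl fun m _ => ?_
      ring
    simp only [e1]
    rw [intervalIntegral.integral_finset_sum
      (fun m _ => (hVq (leg m)).const_mul _)]
    have e2 : ∀ m ∈ Finset.range (k+1),
        (∫ s in (-1:ℝ)..1, ((-1:ℝ)^(k+m) * (2*(m:ℝ)+1)) * ((v s - p.eval s) * (leg m).eval s))
        = ((-1:ℝ)^(k+m) * (2*(m:ℝ)+1)) * ∫ s in (-1:ℝ)..1, (v s - p.eval s) * (leg m).eval s :=
      fun m _ => intervalIntegral.integral_const_mul _ _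
    rw [Finset.sum_congr rfl e2, Finset.sum_range_succ]
    have e3 : ∀ m ∈ Finset.range k,
        ((-1:ℝ)^(k+m) * (2*(m:ℝ)+1)) * (∫ s in (-1:ℝ)..1, (v s - p.eval s) * (leg m).eval s) = 0 := by
      intro m hm
      rw [horth (leg m) (by
        have := leg_natDegree_le m
        have hmk : m < k := Finset.mem_range.mp hm
        omega), mul_zero]
    rw [Finset.sum_eq_zero e3, zero_add]
    have : ((-1:ℝ))^(k+k) = 1 := by
      rw [pow_add, ← mul_pow]
      norm_num
    rw [this]
    ring
  -- Step C : projection integral against Spoly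
  have hC : (∫ s in (-1:ℝ)..1, p.eval s * Spoly.eval s) = 2 * (-1:ℝ)^k * v (-1) := by
    have comm : ∀ s : ℝ, p.eval s * Spoly.eval s
        = (derivative (leg (k+1) - leg k)).eval s * p.eval s := by
      intro s; rw [hSpoly]; ring
    simp only [comm]
    rw [poly_ibp (leg (k+1) - leg k) p]
    have q1 : (leg (k+1) - leg k).eval 1 = 0 := by
      rw [eval_sub, leg_eval_one, leg_eval_one, sub_self]
    have q2 : (leg (k+1) - leg k).eval (-1) = (-1:ℝ)^(k+1) - (-1:ℝ)^k := by
      rw [eval_sub, leg_eval_neg_one, leg_eval_neg_one]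
    have hz1 : derivative^[k] (derivative p) = 0 := by
      rw [← Function.iterate_succ_apply]
      exact iterate_derivative_eq_zero (by omega)
    have hz2 : derivative^[k+1] (derivative p) = 0 := by
      rw [← Function.iterate_succ_apply]
      exact iterate_derivative_eq_zero (by omega)
    have i0 : (∫ s in (-1:ℝ)..1, (leg (k+1) - leg k).eval s * (derivative p).eval s) = 0 := by
      have es : ∀ s : ℝ, (leg (k+1) - leg k).eval s * (derivative p).eval s
          = (leg (k+1)).eval s * (derivative p).eval s - (leg k).eval s * (derivative p).eval s := by
        intro s; rw [eval_sub]; ring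
      simp only [es]
      rw [intervalIntegral.integral_sub (f := fun s => (leg (k+1)).eval s * (derivative p).eval s)
        (g := fun s => (leg k).eval s * (derivative p).eval s)
        (((Polynomial.continuous _).mul (Polynomial.continuous _)).intervalIntegrable _ _)
        (((Polynomial.continuous _).mul (Polynomial.continuous _)).intervalIntegrable _ _)]
      rw [leg_orth (k+1) (derivative p) hz2, leg_orth k (derivative p) hz1, sub_zero]
    rw [i0, q1, q2, hbc]
    rw [pow_succ]
    ring
  -- Step A : split the full integral
  have hA : (∫ s in (-1:ℝ)..1, v s * Spoly.eval s)
      = (∫ s in (-1:ℝ)..1, (v s - p.eval s) * Spoly.eval s)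
        + ∫ s in (-1:ℝ)..1, p.eval s * Spoly.eval s := by
    rw [← intervalIntegral.integral_add (g := fun s => p.eval s * Spoly.eval s) (hVq Spoly)
      (((Polynomial.continuous p).mul (Polynomial.continuous Spoly)).intervalIntegrable _ _)]
    refine intervalIntegral.integral_congr fun s _ => ?_
    ring
  have hgoal : (∫ s in (-1:ℝ)..1,
      v s * ∑ m ∈ Finset.range (k + 1), (-1:ℝ)^(k+m) * (2*(m:ℝ)+1) * (leg m).eval s)
      = ∫ s in (-1:ℝ)..1, v s * Spoly.eval s := by
    refine intervalIntegral.integral_congr fun s _ => ?_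
    rw [hSeval]
  rw [hgoal, hA, hB, hC, pow_succ]
  ring
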